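/- Let d be a positive integer, G a finite group, and F a topologically transitive GCA on G^{Z^d}. Let H = [G,G] be the commutator subgroup of G. Then F maps the closed subgroup H^{Z^d} = {c ∈ G^{Z^d} : c_v ∈ [G,G] for all v ∈ Z^d} into itself, and the restriction of F to H^{Z^d} is topologically transitive. -/

import Mathlib

open scoped commutatorElement

section Aux

variable {G : Type*} [Group G]

lemma myExistsCommList (g : G) (hg : g ∈ commutator G) :
    ∃ l : List (G × G), (l.map fun p => ⁅p.1, p.2⁆).prod = g := by
  rw [commutator_eq_closure] at hg
  induction hg using Subgroup.closure_induction with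
  | mem x hx =>
      obtain ⟨a, b, rfl⟩ := hx
      exact ⟨[(a, b)], by simp⟩
  | one => exact ⟨[], by simp⟩
  | mul x y hx hy ihx ihy =>
      obtain ⟨l1, h1⟩ := ihx
      obtain ⟨l2, h2⟩ := ihy
      exact ⟨l1 ++ l2, by simp [h1, h2]⟩
  | inv x hx ih =>
      obtain ⟨l, rfl⟩ := ih
      refine ⟨(l.map Prod.swap).reverse, ?_⟩
      rw [List.prod_inv_reverse]
      simp [List.map_reverse, List.map_map, Function.comp_def, commutatorElement_inv]

lemma myUniform (G : Type*) [Group G] [Finite G] :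
    ∃ (N : ℕ) (a b : G → Fin N → G), ∀ g ∈ commutator G,
      (List.ofFn fun i => ⁅a g i, b g i⁆).prod = g := by
  classical
  have hch : ∀ g : G, ∃ l : List (G × G),
      g ∈ commutator G → (l.map fun p => ⁅p.1, p.2⁆).prod = g := by
    intro g
    by_cases hg : g ∈ commutator G
    · obtain ⟨l, hl⟩ := myExistsCommList g hg
      exact ⟨l, fun _ => hl⟩
    · exact ⟨[], fun h => absurd h hg⟩
  choose f hf using hch
  obtain ⟨N, hN⟩ := (Set.finite_range fun g : G => (f g).length).bddAbove
  have hNle : ∀ g : G, (f g).length ≤ N := fun g => hN ⟨g, rfl⟩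
  set f' : G → List (G × G) := fun g => f g ++ List.replicate (N - (f g).length) (1, 1)
    with hf'def
  have hlen : ∀ g, (f' g).length = N := by
    intro g; simp only [hf'def, List.length_append, List.length_replicate]
    have := hNle g; omega
  refine ⟨N, fun g i => ((f' g).getD i (1,1)).1, fun g i => ((f' g).getD i (1,1)).2, ?_⟩
  intro g hg
  have key : (List.ofFn fun i : Fin N => ⁅((f' g).getD i (1,1)).1, ((f' g).getD i (1,1)).2⁆)
      = (f' g).map fun p => ⁅p.1, p.2⁆ := by
    apply List.ext_getElem
    · simp [hlen]
    · intro i h1 h2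
      have hi : i < (f' g).length := by simpa [hlen] using (by simpa using h1 : i < N)
      simp only [List.getElem_ofFn, List.getElem_map]
      rw [List.getD_eq_getElem _ _ hi]
  rw [key]
  simp only [hf'def, List.map_append, List.prod_append, List.map_replicate]
  have : (⁅((1 : G), (1 : G)).1, ((1:G),(1:G)).2⁆) = (1 : G) := by simp
  rw [this, List.prod_replicate, one_pow, mul_one, hf g hg]

lemma myProdCommMem (N : ℕ) (f g : Fin N → G) :
    (List.ofFn fun i => ⁅f i, g i⁆).prod ∈ commutator G := by
  apply Subgroup.list_prod_mem
  intro x hx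
  obtain ⟨i, rfl⟩ := Set.mem_range.mp ((List.mem_ofFn' _ _).mp hx)
  rw [commutator_def]
  exact Subgroup.commutator_mem_commutator (Subgroup.mem_top _) (Subgroup.mem_top _)

lemma myOfFnProdApply {ι' : Type*} (N : ℕ) (f : Fin N → (ι' → G)) (v : ι') :
    (List.ofFn f).prod v = (List.ofFn fun i => f i v).prod := by
  have := map_list_prod (Pi.evalMonoidHom (fun _ : ι' => G) v) (List.ofFn f)
  simpa [List.map_ofFn, Function.comp_def] using this

end Aux


lemma myGeometry {d : ℕ} (hd : 0 < d) (ι : Type*) (e : ι → ℤ) (he : Function.Injective e)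
    (E : Finset (Fin d → ℤ)) :
    ∃ t : ι → (Fin d → ℤ), ∀ j j' : ι, ∀ v ∈ E, ∀ v' ∈ E,
      v + t j = v' + t j' → j = j' ∧ v = v' := by
  classical
  obtain ⟨M, hM0, hM⟩ : ∃ M : ℤ, 0 ≤ M ∧ ∀ v ∈ E, |v ⟨0, hd⟩| ≤ M := by
    refine ⟨(E.sup fun v => (v ⟨0, hd⟩).natAbs : ℕ), by positivity, fun v hv => ?_⟩
    rw [Int.abs_eq_natAbs]
    exact_mod_cast Finset.le_sup (f := fun v => (v ⟨0, hd⟩).natAbs) hv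
  refine ⟨fun j m => if m = ⟨0, hd⟩ then e j * (2 * M + 1) else 0, ?_⟩
  intro j j' v hv v' hv' h
  have hk : v ⟨0, hd⟩ + e j * (2 * M + 1) = v' ⟨0, hd⟩ + e j' * (2 * M + 1) := by
    have h0 := congrFun h ⟨0, hd⟩
    simpa using h0
  have hee : e j = e j' := by
    by_contra hne
    have h1 : 1 ≤ |e j - e j'| := Int.one_le_abs (sub_ne_zero.mpr hne)
    have h2 : (e j - e j') * (2 * M + 1) = v' ⟨0, hd⟩ - v ⟨0, hd⟩ := by ring_nf; linarith
    have hT0 : (0 : ℤ) ≤ 2 * M + 1 := by linarith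
    have h3 : |e j - e j'| * (2 * M + 1) = |v' ⟨0, hd⟩ - v ⟨0, hd⟩| := by
      rw [← abs_of_nonneg hT0, ← abs_mul, h2]
    have h4 : |v' ⟨0, hd⟩ - v ⟨0, hd⟩| ≤ |v' ⟨0, hd⟩| + |v ⟨0, hd⟩| := abs_sub _ _
    have h5 := hM v hv
    have h6 := hM v' hv'
    have h7 : 2 * M + 1 ≤ |e j - e j'| * (2 * M + 1) := le_mul_of_one_le_left hT0 h1
    omega
  have hj : j = j' := he hee
  refine ⟨hj, ?_⟩
  funext m
  have := congrFun h m
  rw [hj] at this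
  exact add_right_cancel this


lemma myInj (N : ℕ) :
    Function.Injective (fun j : Fin N × Bool => 2 * (j.1 : ℤ) + (if j.2 then 1 else 0)) := by
  rintro ⟨i, x⟩ ⟨i', x'⟩ h
  cases x <;> cases x' <;> simp at h <;>
    first
      | omega
      | exact Prod.ext (Fin.ext h) rfl

/-- A self-map `T` of a topological space `X` is topologically transitive if for all
nonempty open sets `U, V ⊆ X` there exists `n ≥ 0` with `T^n(U) ∩ V ≠ ∅`. -/
def TopologicallyTransitive {X : Type*} [TopologicalSpace X] (T : X → X) : Prop :=
  ∀ U V : Set X, IsOpen U → IsOpen V → U.Nonempty → V.Nonempty →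
    ∃ n : ℕ, (T^[n] '' U ∩ V).Nonempty

theorem stmt1 (d : ℕ) (hd : 0 < d) (G : Type*) [Group G] [Finite G]
    [TopologicalSpace G] [DiscreteTopology G]
    (F : ((Fin d → ℤ) → G) → ((Fin d → ℤ) → G))
    (hFcont : Continuous F)
    (hFhom : ∀ a b : (Fin d → ℤ) → G, F (a * b) = F a * F b)
    (hFshift : ∀ (u : Fin d → ℤ) (c : (Fin d → ℤ) → G),
      F (fun v => c (v + u)) = fun v => F c (v + u))
    (hFtrans : TopologicallyTransitive F) :
    Set.MapsTo F {c | ∀ v, c v ∈ commutator G} {c | ∀ v, c v ∈ commutator G} ∧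
    ∀ F' : {c : (Fin d → ℤ) → G // ∀ v, c v ∈ commutator G} →
           {c : (Fin d → ℤ) → G // ∀ v, c v ∈ commutator G},
      (∀ c, (F' c : (Fin d → ℤ) → G) = F (c : (Fin d → ℤ) → G)) →
      TopologicallyTransitive F' := by
  classical
  obtain ⟨N, a, b, hab⟩ := myUniform G
  -- iterates of F are homomorphisms and commute with shifts
  have hFnhom : ∀ (n : ℕ) (x y : (Fin d → ℤ) → G), F^[n] (x * y) = F^[n] x * F^[n] y := by
    intro n
    induction n with
    | zero => intro x y; rfl
    | succ n ih =>
        intro x y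
        rw [Function.iterate_succ_apply, Function.iterate_succ_apply,
          Function.iterate_succ_apply, hFhom, ih]
  have hFnshift : ∀ (n : ℕ) (u : Fin d → ℤ) (c : (Fin d → ℤ) → G),
      F^[n] (fun v => c (v + u)) = fun v => F^[n] c (v + u) := by
    intro n
    induction n with
    | zero => intro u c; rfl
    | succ n ih =>
        intro u c
        rw [Function.iterate_succ_apply, hFshift, ih, Function.iterate_succ_apply]
  have hFnprod : ∀ (n : ℕ) (L : List ((Fin d → ℤ) → G)),
      F^[n] L.prod = (L.map (F^[n])).prod := fun n L =>
    map_list_prod (MonoidHom.mk' (F^[n]) (fun x y => hFnhom n x y)) L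
  have hFncomm : ∀ (n : ℕ) (x y : (Fin d → ℤ) → G), F^[n] ⁅x, y⁆ = ⁅F^[n] x, F^[n] y⁆ :=
    fun n x y => map_commutatorElement (MonoidHom.mk' (F^[n]) (fun x y => hFnhom n x y)) x y
  -- the basic decomposition of a commutator-valued configuration
  have hdecomp : ∀ c : (Fin d → ℤ) → G, (∀ v, c v ∈ commutator G) →
      c = (List.ofFn fun i : Fin N =>
        ⁅(fun v => a (c v) i), (fun v => b (c v) i)⁆).prod := by
    intro c hc
    funext v
    rw [myOfFnProdApply]
    exact (hab (c v) (hc v)).symm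
  -- main image lemma: image of a commutator-valued configuration under F^[n]
  have himg : ∀ (n : ℕ) (A B : Fin N → ((Fin d → ℤ) → G)),
      F^[n] (List.ofFn fun i => ⁅A i, B i⁆).prod
        = (List.ofFn fun i => ⁅F^[n] (A i), F^[n] (B i)⁆).prod := by
    intro n A B
    rw [hFnprod, List.map_ofFn]
    have : (F^[n] ∘ fun i => ⁅A i, B i⁆) = fun i => ⁅F^[n] (A i), F^[n] (B i)⁆ :=
      funext fun i => hFncomm n (A i) (B i)
    rw [this]
  have mapsTo : Set.MapsTo F {c | ∀ v, c v ∈ commutator G} {c | ∀ v, c v ∈ commutator G} := by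
    intro c hc
    intro v
    have h1 : F c = F^[1] c := by rw [Function.iterate_one]
    rw [h1, hdecomp c hc, himg 1, myOfFnProdApply]
    exact myProdCommMem N _ _
  refine ⟨mapsTo, ?_⟩
  intro F' hF'
  have hval : ∀ (n : ℕ) (z : {c : (Fin d → ℤ) → G // ∀ v, c v ∈ commutator G}),
      ((F'^[n] z : {c : (Fin d → ℤ) → G // ∀ v, c v ∈ commutator G}) : (Fin d → ℤ) → G)
        = F^[n] (z : (Fin d → ℤ) → G) := by
    intro n
    induction n with
    | zero => intro z; rfl
    | succ n ih =>
        intro z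
        rw [Function.iterate_succ_apply', Function.iterate_succ_apply', hF', ih]
  intro U V hU hV hUne hVne
  obtain ⟨u0, hu0⟩ := hUne
  obtain ⟨v0, hv0⟩ := hVne
  -- extract finite windows
  have hwin : ∀ (W : Set {c : (Fin d → ℤ) → G // ∀ v, c v ∈ commutator G}), IsOpen W →
      ∀ w0 ∈ W, ∃ E : Finset (Fin d → ℤ),
        ∀ x : {c : (Fin d → ℤ) → G // ∀ v, c v ∈ commutator G},
          (∀ v ∈ E, (x : (Fin d → ℤ) → G) v = (w0 : (Fin d → ℤ) → G) v) → x ∈ W := by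
    intro W hW w0 hw0
    rw [isOpen_induced_iff] at hW
    obtain ⟨W', hW', rfl⟩ := hW
    obtain ⟨I, u, h1, h2⟩ := isOpen_pi_iff.mp hW' (w0 : (Fin d → ℤ) → G) hw0
    refine ⟨I, fun x hx => ?_⟩
    apply h2
    intro v hv
    rw [hx v hv]
    exact (h1 v hv).2
  obtain ⟨E1, hE1⟩ := hwin U hU u0 hu0
  obtain ⟨E2, hE2⟩ := hwin V hV v0 hv0
  -- geometry: disjoint translates
  obtain ⟨t, hdisj⟩ := myGeometry hd (Fin N × Bool) _ (myInj N) (E1 ∪ E2)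
  set E : Finset (Fin d → ℤ) := E1 ∪ E2 with hEdef
  -- source and target patterns
  set s : Fin N × Bool → ((Fin d → ℤ) → G) := fun j v =>
    if j.2 then b ((u0 : (Fin d → ℤ) → G) v) j.1 else a ((u0 : (Fin d → ℤ) → G) v) j.1
    with hsdef
  set r : Fin N × Bool → ((Fin d → ℤ) → G) := fun j v =>
    if j.2 then b ((v0 : (Fin d → ℤ) → G) v) j.1 else a ((v0 : (Fin d → ℤ) → G) v) j.1
    with hrdef
  -- combined patterns
  have hcomb : ∀ s' : Fin N × Bool → ((Fin d → ℤ) → G), ∃ P : (Fin d → ℤ) → G,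
      ∀ j, ∀ v ∈ E, P (v + t j) = s' j v := by
    intro s'
    refine ⟨fun u => if h : ∃ q : (Fin N × Bool) × (Fin d → ℤ), q.2 ∈ E ∧ u = q.2 + t q.1
      then s' h.choose.1 h.choose.2 else 1, ?_⟩
    intro j v hv
    have hex : ∃ q : (Fin N × Bool) × (Fin d → ℤ), q.2 ∈ E ∧ v + t j = q.2 + t q.1 :=
      ⟨(j, v), hv, rfl⟩
    show (if h : ∃ q : (Fin N × Bool) × (Fin d → ℤ), q.2 ∈ E ∧ v + t j = q.2 + t q.1
      then s' h.choose.1 h.choose.2 else 1) = s' j v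
    rw [dif_pos hex]
    obtain ⟨hq1, hq2⟩ := hex.choose_spec
    obtain ⟨hj, hvv⟩ := hdisj hex.choose.1 j hex.choose.2 hq1 v hv hq2.symm
    rw [hj, hvv]
  obtain ⟨P, hP⟩ := hcomb s
  obtain ⟨Q, hQ⟩ := hcomb r
  -- cylinder open sets in the full space
  have hcyl : ∀ s' : Fin N × Bool → ((Fin d → ℤ) → G),
      IsOpen {x : (Fin d → ℤ) → G | ∀ j, ∀ v ∈ E, x (v + t j) = s' j v} := by
    intro s'
    have : {x : (Fin d → ℤ) → G | ∀ j, ∀ v ∈ E, x (v + t j) = s' j v}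
        = ⋂ j : Fin N × Bool, ⋂ v ∈ E, {x : (Fin d → ℤ) → G | x (v + t j) = s' j v} := by
      ext x; simp [Set.mem_iInter]
    rw [this]
    refine isOpen_iInter_of_finite fun j => ?_
    refine isOpen_biInter_finset fun v _ => ?_
    have heq : {x : (Fin d → ℤ) → G | x (v + t j) = s' j v}
        = (fun x : (Fin d → ℤ) → G => x (v + t j)) ⁻¹' {s' j v} := rfl
    rw [heq]
    exact (continuous_apply (v + t j)).isOpen_preimage _ (isOpen_discrete _)
  obtain ⟨n, y, hy⟩ := hFtrans
    {x | ∀ j, ∀ v ∈ E, x (v + t j) = s j v}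
    {x | ∀ j, ∀ v ∈ E, x (v + t j) = r j v}
    (hcyl s) (hcyl r) ⟨P, hP⟩ ⟨Q, hQ⟩
  obtain ⟨⟨x, hxU, rfl⟩, hyV⟩ := hy
  -- the shifted witnesses
  set A : Fin N → ((Fin d → ℤ) → G) := fun i v => x (v + t (i, false)) with hAdef
  set B : Fin N → ((Fin d → ℤ) → G) := fun i v => x (v + t (i, true)) with hBdef
  have hAE : ∀ i, ∀ v ∈ E, A i v = a ((u0 : (Fin d → ℤ) → G) v) i := by
    intro i v hv
    have := hxU (i, false) v hv
    simpa [hsdef, hAdef] using this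
  have hBE : ∀ i, ∀ v ∈ E, B i v = b ((u0 : (Fin d → ℤ) → G) v) i := by
    intro i v hv
    have := hxU (i, true) v hv
    simpa [hsdef, hBdef] using this
  have hFA : ∀ i, ∀ v ∈ E, F^[n] (A i) v = a ((v0 : (Fin d → ℤ) → G) v) i := by
    intro i v hv
    have hsh : F^[n] (A i) = fun v => F^[n] x (v + t (i, false)) := hFnshift n (t (i, false)) x
    rw [hsh]
    have := hyV (i, false) v hv
    simpa [hrdef] using this
  have hFB : ∀ i, ∀ v ∈ E, F^[n] (B i) v = b ((v0 : (Fin d → ℤ) → G) v) i := by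
    intro i v hv
    have hsh : F^[n] (B i) = fun v => F^[n] x (v + t (i, true)) := hFnshift n (t (i, true)) x
    rw [hsh]
    have := hyV (i, true) v hv
    simpa [hrdef] using this
  -- the configuration in the commutator subgroup
  set c : (Fin d → ℤ) → G := (List.ofFn fun i : Fin N => ⁅A i, B i⁆).prod with hcdef
  have hcmem : ∀ v, c v ∈ commutator G := by
    intro v
    rw [hcdef, myOfFnProdApply]
    exact myProdCommMem N _ _
  have hcE : ∀ v ∈ E, c v = (u0 : (Fin d → ℤ) → G) v := by
    intro v hv
    rw [hcdef, myOfFnProdApply]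
    have : (fun i : Fin N => ⁅A i, B i⁆ v)
        = fun i => ⁅a ((u0 : (Fin d → ℤ) → G) v) i, b ((u0 : (Fin d → ℤ) → G) v) i⁆ := by
      funext i
      show ⁅A i v, B i v⁆ = _
      rw [hAE i v hv, hBE i v hv]
    rw [this]
    exact hab _ (u0.2 v)
  have hFcE : ∀ v ∈ E, F^[n] c v = (v0 : (Fin d → ℤ) → G) v := by
    intro v hv
    rw [hcdef, himg n, myOfFnProdApply]
    have : (fun i : Fin N => ⁅F^[n] (A i), F^[n] (B i)⁆ v)
        = fun i => ⁅a ((v0 : (Fin d → ℤ) → G) v) i, b ((v0 : (Fin d → ℤ) → G) v) i⁆ := by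
      funext i
      show ⁅F^[n] (A i) v, F^[n] (B i) v⁆ = _
      rw [hFA i v hv, hFB i v hv]
    rw [this]
    exact hab _ (v0.2 v)
  -- conclude
  set z : {c : (Fin d → ℤ) → G // ∀ v, c v ∈ commutator G} := ⟨c, hcmem⟩ with hzdef
  refine ⟨n, F'^[n] z, ⟨z, ?_, rfl⟩, ?_⟩
  · apply hE1
    intro v hv
    exact hcE v (Finset.mem_union_left _ hv)
  · apply hE2
    intro v hv
    rw [hval n z]
    exact hFcE v (Finset.mem_union_right _ hv)
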